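/- Theorem 2.1 (conservation of mass / L²-stability of the semi-discrete DG scheme): If (u_h, w_h) is a solution of the semi-discrete DG scheme for the nonlinear biharmonic Schrödinger equation with numerical fluxes given by parameters α₁, α₂ ∈ [0,1], then the discrete mass M_h(t) = ∫_I |u_h(x,t)|² dx satisfies M_h(t) = M_h(0) for all t ≥ 0. -/

import Mathlib

open MeasureTheory
open Polynomial intervalIntegral

noncomputable section

/-- Minus-side (left) trace of a piecewise polynomial `v` at the interface
`x_{j+1/2}` (the right endpoint of cell `I_j`).  Cells are indexed by `Fin (n+1)`
and mesh points by `Fin (n+2)`. -/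
def trMinus (n : ℕ) (x : Fin (n + 2) → ℝ) (v : Fin (n + 1) → Polynomial ℂ)
    (j : Fin (n + 1)) : ℂ :=
  (v j).eval ((x j.succ : ℝ) : ℂ)

/-- Plus-side (right) trace of a piecewise polynomial `v` at the interface
`x_{j+1/2}`: the value of the polynomial of the next cell (periodically) at its left
endpoint.  For the last interface this is cell `0` at `x_a`, realizing the periodic
identification of `x_{1/2}` and `x_{n+1/2}`. -/
def trPlus (n : ℕ) (x : Fin (n + 2) → ℝ) (v : Fin (n + 1) → Polynomial ℂ)
    (j : Fin (n + 1)) : ℂ :=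
  (v (j + 1)).eval ((x (j + 1).castSucc : ℝ) : ℂ)

/-- Numerical flux `û = α₁ u_h⁺ + (1−α₁) u_h⁻` at the interface `x_{j+1/2}`. -/
def fluxUhat (n : ℕ) (x : Fin (n + 2) → ℝ) (α₁ : ℝ)
    (uh : Fin (n + 1) → Polynomial ℂ) (j : Fin (n + 1)) : ℂ :=
  (α₁ : ℂ) * trPlus n x uh j + (1 - (α₁ : ℂ)) * trMinus n x uh j

/-- Numerical flux `w̃ₓ = (1−α₁) (w_h)ₓ⁺ + α₁ (w_h)ₓ⁻` at the interface `x_{j+1/2}`. -/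
def fluxWx (n : ℕ) (x : Fin (n + 2) → ℝ) (α₁ : ℝ)
    (wh : Fin (n + 1) → Polynomial ℂ) (j : Fin (n + 1)) : ℂ :=
  (1 - (α₁ : ℂ)) * trPlus n x (fun k => (wh k).derivative) j
    + (α₁ : ℂ) * trMinus n x (fun k => (wh k).derivative) j

/-- Numerical flux `ûₓ = α₂ (u_h)ₓ⁺ + (1−α₂) (u_h)ₓ⁻` at the interface `x_{j+1/2}`. -/
def fluxUx (n : ℕ) (x : Fin (n + 2) → ℝ) (α₂ : ℝ)
    (uh : Fin (n + 1) → Polynomial ℂ) (j : Fin (n + 1)) : ℂ :=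
  (α₂ : ℂ) * trPlus n x (fun k => (uh k).derivative) j
    + (1 - (α₂ : ℂ)) * trMinus n x (fun k => (uh k).derivative) j

/-- Numerical flux `w̃ = (1−α₂) w_h⁺ + α₂ w_h⁻` at the interface `x_{j+1/2}`. -/
def fluxWtilde (n : ℕ) (x : Fin (n + 2) → ℝ) (α₂ : ℝ)
    (wh : Fin (n + 1) → Polynomial ℂ) (j : Fin (n + 1)) : ℂ :=
  (1 - (α₂ : ℂ)) * trPlus n x wh j + (α₂ : ℂ) * trMinus n x wh j

set_option maxRecDepth 8000

local notation "conj'" => starRingEnd ℂ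




/-- conjugate polynomial -/
def pconj (p : Polynomial ℂ) : Polynomial ℂ := p.map (starRingEnd ℂ)

lemma eval_pconj (p : Polynomial ℂ) (y : ℝ) :
    (pconj p).eval ((y : ℝ) : ℂ) = conj' (p.eval ((y : ℝ) : ℂ)) := by
  rw [pconj, eval_map, ← Complex.conj_ofReal y, Polynomial.eval₂_at_apply]
  simp [Complex.conj_ofReal]

lemma pconj_derivative (p : Polynomial ℂ) :
    pconj (derivative p) = derivative (pconj p) := by
  simp [pconj, derivative_map]

lemma natDegree_pconj (p : Polynomial ℂ) : (pconj p).natDegree ≤ p.natDegree :=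
  natDegree_map_le

/-- continuity of real-line evaluation -/
lemma contEval (p : Polynomial ℂ) : Continuous (fun y : ℝ => p.eval ((y : ℝ) : ℂ)) :=
  (p.continuous).comp Complex.continuous_ofReal

lemma intervalIntegrableEval (p : Polynomial ℂ) (a b : ℝ) :
    IntervalIntegrable (fun y : ℝ => p.eval ((y : ℝ) : ℂ)) volume a b :=
  (contEval p).intervalIntegrable a b

/-- FTC for polynomials along the real line -/
lemma integral_derivative_eval (p : Polynomial ℂ) (a b : ℝ) :
    (∫ y in a..b, (derivative p).eval ((y : ℝ) : ℂ)) =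
      p.eval ((b : ℝ) : ℂ) - p.eval ((a : ℝ) : ℂ) := by
  apply intervalIntegral.integral_eq_sub_of_hasDerivAt
  · intro y hy
    exact (p.hasDerivAt ((y : ℝ) : ℂ)).comp_ofReal
  · exact intervalIntegrableEval _ a b

lemma conj_intervalIntegral (f : ℝ → ℂ) (a b : ℝ) :
    conj' (∫ y in a..b, f y) = ∫ y in a..b, conj' (f y) := by
  simp [intervalIntegral, ← integral_conj, map_sub]



/-- nodes for quadrature -/
def qnode (m : ℕ) (k : Fin m) : ℂ := ((k : ℕ) : ℝ)

/-- quadrature weights -/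
def qweight (m : ℕ) (a b : ℝ) (k : Fin m) : ℂ :=
  ∫ y in a..b, (Lagrange.basis Finset.univ (qnode m) k).eval ((y : ℝ) : ℂ)

lemma quadrature (m : ℕ) (a b : ℝ) (f : Polynomial ℂ) (hf : f.natDegree < m) :
    (∫ y in a..b, f.eval ((y : ℝ) : ℂ)) =
      ∑ k : Fin m, f.eval (qnode m k) * qweight m a b k := by
  have hinj : Set.InjOn (qnode m) (Finset.univ : Finset (Fin m)) := by
    intro i _ j _ hij
    have : ((i : ℕ) : ℝ) = ((j : ℕ) : ℝ) := by
      simpa [qnode, Complex.ofReal_inj] using hij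
    exact Fin.val_injective (by exact_mod_cast this)
  have hdeg : f.degree < (Finset.univ : Finset (Fin m)).card := by
    refine lt_of_le_of_lt f.degree_le_natDegree ?_
    rw [Finset.card_univ, Fintype.card_fin]
    exact_mod_cast hf
  conv_lhs => rw [Lagrange.eq_interpolate hinj hdeg]
  rw [Lagrange.interpolate_apply]
  have : ∀ y : ℝ,
      (∑ k ∈ Finset.univ, C (f.eval (qnode m k)) * Lagrange.basis Finset.univ (qnode m) k).eval
        ((y : ℝ) : ℂ)
      = ∑ k : Fin m, f.eval (qnode m k) *
          (Lagrange.basis Finset.univ (qnode m) k).eval ((y : ℝ) : ℂ) := by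
    intro y; rw [eval_finset_sum]; simp
  rw [intervalIntegral.integral_congr (g := fun y : ℝ => ∑ k : Fin m,
        f.eval (qnode m k) * (Lagrange.basis Finset.univ (qnode m) k).eval ((y : ℝ) : ℂ))
      (fun y _ => this y)]
  rw [intervalIntegral.integral_finset_sum]
  · refine Finset.sum_congr rfl fun k _ => ?_
    rw [intervalIntegral.integral_const_mul]; rfl
  · intro k _
    exact (continuous_const.mul ((Lagrange.basis Finset.univ (qnode m) k).continuous.comp
      Complex.continuous_ofReal)).intervalIntegrable a b

lemma absSq_integral_eq_re (p : Polynomial ℂ) (a b : ℝ) :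
    (∫ y in a..b, ‖p.eval ((y : ℝ) : ℂ)‖ ^ 2) =
      (∫ y in a..b, (p * pconj p).eval ((y : ℝ) : ℂ)).re := by
  have h : ∀ y : ℝ, (p * pconj p).eval ((y : ℝ) : ℂ)
      = ((‖p.eval ((y : ℝ) : ℂ)‖ ^ 2 : ℝ) : ℂ) := by
    intro y
    rw [eval_mul, eval_pconj, Complex.mul_conj, Complex.sq_norm]
  rw [intervalIntegral.integral_congr (fun y _ => h y)]
  rw [intervalIntegral.integral_ofReal]
  simp

lemma hasDeriv_cell (q : ℕ) (a b : ℝ) (u ut : ℝ → Polynomial ℂ) (t : ℝ) (ht : 0 ≤ t)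
    (hdeg : ∀ s : ℝ, 0 ≤ s → (u s).natDegree ≤ q) (hdegt : (ut t).natDegree ≤ q)
    (hd : ∀ y : ℝ, HasDerivWithinAt (fun s : ℝ => (u s).eval ((y : ℝ) : ℂ))
      ((ut t).eval ((y : ℝ) : ℂ)) (Set.Ici 0) t) :
    HasDerivWithinAt (fun s : ℝ => ∫ y in a..b, ((u s) * pconj (u s)).eval ((y : ℝ) : ℂ))
      (∫ y in a..b, ((ut t) * pconj (u t) + (u t) * pconj (ut t)).eval ((y : ℝ) : ℂ))
      (Set.Ici 0) t := by
  set m := 2 * q + 1 with hm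
  have hdegmul : ∀ s : ℝ, 0 ≤ s → ((u s) * pconj (u s)).natDegree < m := by
    intro s hs
    refine lt_of_le_of_lt (natDegree_mul_le.trans
      (add_le_add (hdeg s hs) ((natDegree_pconj _).trans (hdeg s hs)))) ?_
    omega
  have key : ∀ s ∈ Set.Ici (0 : ℝ),
      (∫ y in a..b, ((u s) * pconj (u s)).eval ((y : ℝ) : ℂ))
        = ∑ k : Fin m, ((u s).eval (qnode m k) * conj' ((u s).eval (qnode m k)))
            * qweight m a b k := by
    intro s hs
    rw [quadrature m a b _ (hdegmul s hs)]
    refine Finset.sum_congr rfl fun k _ => ?_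
    simp only [eval_mul, qnode, eval_pconj]
  have hsum : HasDerivWithinAt
      (fun s : ℝ => ∑ k : Fin m, ((u s).eval (qnode m k) * conj' ((u s).eval (qnode m k)))
          * qweight m a b k)
      (∑ k : Fin m, ((ut t).eval (qnode m k) * conj' ((u t).eval (qnode m k))
          + (u t).eval (qnode m k) * conj' ((ut t).eval (qnode m k))) * qweight m a b k)
      (Set.Ici 0) t := by
    refine HasDerivWithinAt.fun_sum fun k _ => ?_
    have hz := hd ((k : ℕ) : ℝ)
    have hzc : HasDerivWithinAt (fun s : ℝ => conj' ((u s).eval (qnode m k)))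
        (conj' ((ut t).eval (qnode m k))) (Set.Ici 0) t := by
      simpa only [starRingEnd_apply, qnode] using hz.star
    exact (hz.mul hzc).mul_const _
  have hval : (∑ k : Fin m, ((ut t).eval (qnode m k) * conj' ((u t).eval (qnode m k))
          + (u t).eval (qnode m k) * conj' ((ut t).eval (qnode m k))) * qweight m a b k)
      = ∫ y in a..b, ((ut t) * pconj (u t) + (u t) * pconj (ut t)).eval ((y : ℝ) : ℂ) := by
    have hdeg2 : ((ut t) * pconj (u t) + (u t) * pconj (ut t)).natDegree < m := by
      refine lt_of_le_of_lt (natDegree_add_le _ _) ?_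
      have h1 : ((ut t) * pconj (u t)).natDegree ≤ q + q :=
        natDegree_mul_le.trans (add_le_add hdegt ((natDegree_pconj _).trans (hdeg t ht)))
      have h2 : ((u t) * pconj (ut t)).natDegree ≤ q + q :=
        natDegree_mul_le.trans (add_le_add (hdeg t ht) ((natDegree_pconj _).trans hdegt))
      omega
    rw [quadrature m a b _ hdeg2]
    refine (Finset.sum_congr rfl fun k _ => ?_).symm
    simp only [eval_add, eval_mul, qnode, eval_pconj]
  rw [← hval]
  exact hsum.congr key (key t ht)

def cellInt (n : ℕ) (x : Fin (n + 2) → ℝ) (j : Fin (n + 1)) (p : Polynomial ℂ) : ℂ :=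
  ∫ y in (x j.castSucc : ℝ)..(x j.succ : ℝ), p.eval ((y : ℝ) : ℂ)

lemma key_step (n q : ℕ) (x : Fin (n + 2) → ℝ)
    (F' : ℝ → ℝ) (hF' : ContinuousOn F' (Set.Ici 0)) (α₁ α₂ : ℝ)
    (u w ut : Fin (n + 1) → Polynomial ℂ)
    (hdu : ∀ j, (u j).natDegree ≤ q) (hdw : ∀ j, (w j).natDegree ≤ q)
    (s1 : ∀ j : Fin (n + 1), ∀ φ : Polynomial ℂ, φ.natDegree ≤ q →
      (∫ y in (x j.castSucc : ℝ)..(x j.succ : ℝ),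
          Complex.I * (ut j).eval ((y : ℝ) : ℂ) * φ.eval ((y : ℝ) : ℂ)
            + (w j).eval ((y : ℝ) : ℂ) * (φ.derivative.derivative).eval ((y : ℝ) : ℂ)
            + (u j).eval ((y : ℝ) : ℂ)
                * ((F' (‖(u j).eval ((y : ℝ) : ℂ)‖ ^ 2) : ℝ) : ℂ)
                * φ.eval ((y : ℝ) : ℂ)) =
        - fluxWx n x α₁ w j * φ.eval ((x j.succ : ℝ) : ℂ)
          + fluxWx n x α₁ w (j - 1) * φ.eval ((x j.castSucc : ℝ) : ℂ)
          + fluxWtilde n x α₂ w j * φ.derivative.eval ((x j.succ : ℝ) : ℂ)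
          - fluxWtilde n x α₂ w (j - 1) * φ.derivative.eval ((x j.castSucc : ℝ) : ℂ))
    (s2 : ∀ j : Fin (n + 1), ∀ ψ : Polynomial ℂ, ψ.natDegree ≤ q →
      (∫ y in (x j.castSucc : ℝ)..(x j.succ : ℝ),
          (w j).eval ((y : ℝ) : ℂ) * ψ.eval ((y : ℝ) : ℂ)
            - (u j).eval ((y : ℝ) : ℂ) * (ψ.derivative.derivative).eval ((y : ℝ) : ℂ)) =
        fluxUx n x α₂ u j * ψ.eval ((x j.succ : ℝ) : ℂ)
          - fluxUx n x α₂ u (j - 1) * ψ.eval ((x j.castSucc : ℝ) : ℂ)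
          - fluxUhat n x α₁ u j * ψ.derivative.eval ((x j.succ : ℝ) : ℂ)
          + fluxUhat n x α₁ u (j - 1) * ψ.derivative.eval ((x j.castSucc : ℝ) : ℂ)) :
    (∑ j : Fin (n + 1), cellInt n x j (ut j * pconj (u j)))
      + conj' (∑ j : Fin (n + 1), cellInt n x j (ut j * pconj (u j))) = 0 := by
  -- trace abbreviations
  have hplus : ∀ (vv : Fin (n + 1) → Polynomial ℂ) (j : Fin (n + 1)),
      trPlus n x vv (j - 1) = (vv j).eval ((x j.castSucc : ℝ) : ℂ) := by
    intro vv j; rw [trPlus, sub_add_cancel]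
  -- the nonlinear term
  set R : Fin (n + 1) → ℂ := fun j =>
    ∫ y in (x j.castSucc : ℝ)..(x j.succ : ℝ),
      (u j).eval ((y : ℝ) : ℂ)
        * ((F' (‖(u j).eval ((y : ℝ) : ℂ)‖ ^ 2) : ℝ) : ℂ)
        * conj' ((u j).eval ((y : ℝ) : ℂ)) with hRdef
  -- eq1 : tested scheme 1
  have eq1 : ∀ j : Fin (n + 1),
      Complex.I * cellInt n x j (ut j * pconj (u j))
        + cellInt n x j (w j * derivative (derivative (pconj (u j))))
        + R j =
      - fluxWx n x α₁ w j * conj' (trMinus n x u j)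
        + fluxWx n x α₁ w (j - 1) * conj' (trPlus n x u (j - 1))
        + fluxWtilde n x α₂ w j * conj' (trMinus n x (fun k => derivative (u k)) j)
        - fluxWtilde n x α₂ w (j - 1)
            * conj' (trPlus n x (fun k => derivative (u k)) (j - 1)) := by
    intro j
    have h := s1 j (pconj (u j)) ((natDegree_pconj _).trans (hdu j))
    have hi1 : IntervalIntegrable (fun y : ℝ =>
        Complex.I * (ut j).eval ((y : ℝ) : ℂ) * (pconj (u j)).eval ((y : ℝ) : ℂ))
        volume (x j.castSucc : ℝ) (x j.succ : ℝ) :=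
      ((continuous_const.mul (contEval _)).mul (contEval _)).intervalIntegrable _ _
    have hi2 : IntervalIntegrable (fun y : ℝ =>
        (w j).eval ((y : ℝ) : ℂ)
          * ((pconj (u j)).derivative.derivative).eval ((y : ℝ) : ℂ))
        volume (x j.castSucc : ℝ) (x j.succ : ℝ) :=
      ((contEval _).mul (contEval _)).intervalIntegrable _ _
    have hi3 : IntervalIntegrable (fun y : ℝ =>
        (u j).eval ((y : ℝ) : ℂ)
          * ((F' (‖(u j).eval ((y : ℝ) : ℂ)‖ ^ 2) : ℝ) : ℂ)
          * (pconj (u j)).eval ((y : ℝ) : ℂ))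
        volume (x j.castSucc : ℝ) (x j.succ : ℝ) := by
      apply ContinuousOn.intervalIntegrable
      refine (((contEval _).continuousOn.mul ?_).mul (contEval _).continuousOn)
      refine Complex.continuous_ofReal.comp_continuousOn ?_
      refine hF'.comp (((continuous_norm.comp (contEval _)).pow 2).continuousOn) ?_
      exact fun y _ => Set.mem_Ici.2 (sq_nonneg _)
    rw [intervalIntegral.integral_add (hi1.add hi2) hi3,
        intervalIntegral.integral_add hi1 hi2] at h
    have h1' : (∫ y in (x j.castSucc : ℝ)..(x j.succ : ℝ),
        Complex.I * (ut j).eval ((y : ℝ) : ℂ) * (pconj (u j)).eval ((y : ℝ) : ℂ))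
        = Complex.I * cellInt n x j (ut j * pconj (u j)) := by
      rw [cellInt, ← intervalIntegral.integral_const_mul]
      exact intervalIntegral.integral_congr fun y _ => by rw [eval_mul]; ring
    have h2' : (∫ y in (x j.castSucc : ℝ)..(x j.succ : ℝ),
        (w j).eval ((y : ℝ) : ℂ)
          * ((pconj (u j)).derivative.derivative).eval ((y : ℝ) : ℂ))
        = cellInt n x j (w j * derivative (derivative (pconj (u j)))) := by
      rw [cellInt]
      exact intervalIntegral.integral_congr fun y _ => eval_mul.symm
    have h3' : (∫ y in (x j.castSucc : ℝ)..(x j.succ : ℝ),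
        (u j).eval ((y : ℝ) : ℂ)
          * ((F' (‖(u j).eval ((y : ℝ) : ℂ)‖ ^ 2) : ℝ) : ℂ)
          * (pconj (u j)).eval ((y : ℝ) : ℂ)) = R j := by
      rw [hRdef]
      exact intervalIntegral.integral_congr fun y _ => by rw [eval_pconj]
    rw [h1', h2', h3'] at h
    have e1 : (pconj (u j)).eval ((x j.succ : ℝ) : ℂ) = conj' (trMinus n x u j) :=
      eval_pconj _ _
    have e2 : (pconj (u j)).eval ((x j.castSucc : ℝ) : ℂ)
        = conj' (trPlus n x u (j - 1)) := by rw [eval_pconj, hplus]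
    have e3 : (pconj (u j)).derivative.eval ((x j.succ : ℝ) : ℂ)
        = conj' (trMinus n x (fun k => derivative (u k)) j) := by
      rw [← pconj_derivative, eval_pconj]; rfl
    have e4 : (pconj (u j)).derivative.eval ((x j.castSucc : ℝ) : ℂ)
        = conj' (trPlus n x (fun k => derivative (u k)) (j - 1)) := by
      rw [← pconj_derivative, eval_pconj, hplus]
    rw [e1, e2, e3, e4] at h
    exact h
  -- eq2 : tested scheme 2
  have eq2 : ∀ j : Fin (n + 1),
      cellInt n x j (w j * pconj (w j))
        - cellInt n x j (u j * derivative (derivative (pconj (w j)))) =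
      fluxUx n x α₂ u j * conj' (trMinus n x w j)
        - fluxUx n x α₂ u (j - 1) * conj' (trPlus n x w (j - 1))
        - fluxUhat n x α₁ u j * conj' (trMinus n x (fun k => derivative (w k)) j)
        + fluxUhat n x α₁ u (j - 1)
            * conj' (trPlus n x (fun k => derivative (w k)) (j - 1)) := by
    intro j
    have h := s2 j (pconj (w j)) ((natDegree_pconj _).trans (hdw j))
    have hg1 : IntervalIntegrable (fun y : ℝ =>
        (w j).eval ((y : ℝ) : ℂ) * (pconj (w j)).eval ((y : ℝ) : ℂ))
        volume (x j.castSucc : ℝ) (x j.succ : ℝ) :=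
      ((contEval _).mul (contEval _)).intervalIntegrable _ _
    have hg2 : IntervalIntegrable (fun y : ℝ =>
        (u j).eval ((y : ℝ) : ℂ)
          * ((pconj (w j)).derivative.derivative).eval ((y : ℝ) : ℂ))
        volume (x j.castSucc : ℝ) (x j.succ : ℝ) :=
      ((contEval _).mul (contEval _)).intervalIntegrable _ _
    rw [intervalIntegral.integral_sub hg1 hg2] at h
    have h1' : (∫ y in (x j.castSucc : ℝ)..(x j.succ : ℝ),
        (w j).eval ((y : ℝ) : ℂ) * (pconj (w j)).eval ((y : ℝ) : ℂ))
        = cellInt n x j (w j * pconj (w j)) := by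
      rw [cellInt]
      exact intervalIntegral.integral_congr fun y _ => eval_mul.symm
    have h2' : (∫ y in (x j.castSucc : ℝ)..(x j.succ : ℝ),
        (u j).eval ((y : ℝ) : ℂ)
          * ((pconj (w j)).derivative.derivative).eval ((y : ℝ) : ℂ))
        = cellInt n x j (u j * derivative (derivative (pconj (w j)))) := by
      rw [cellInt]
      exact intervalIntegral.integral_congr fun y _ => eval_mul.symm
    rw [h1', h2'] at h
    have e1 : (pconj (w j)).eval ((x j.succ : ℝ) : ℂ) = conj' (trMinus n x w j) :=
      eval_pconj _ _
    have e2 : (pconj (w j)).eval ((x j.castSucc : ℝ) : ℂ)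
        = conj' (trPlus n x w (j - 1)) := by rw [eval_pconj, hplus]
    have e3 : (pconj (w j)).derivative.eval ((x j.succ : ℝ) : ℂ)
        = conj' (trMinus n x (fun k => derivative (w k)) j) := by
      rw [← pconj_derivative, eval_pconj]; rfl
    have e4 : (pconj (w j)).derivative.eval ((x j.castSucc : ℝ) : ℂ)
        = conj' (trPlus n x (fun k => derivative (w k)) (j - 1)) := by
      rw [← pconj_derivative, eval_pconj, hplus]
    rw [e1, e2, e3, e4] at h
    exact h
  -- eq3 : integration by parts (FTC) on each cell
  have eq3 : ∀ j : Fin (n + 1),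
      cellInt n x j (w j * derivative (derivative (pconj (u j))))
        - conj' (cellInt n x j (u j * derivative (derivative (pconj (w j))))) =
      (trMinus n x w j * conj' (trMinus n x (fun k => derivative (u k)) j)
          - trMinus n x (fun k => derivative (w k)) j * conj' (trMinus n x u j))
        - (trPlus n x w (j - 1) * conj' (trPlus n x (fun k => derivative (u k)) (j - 1))
          - trPlus n x (fun k => derivative (w k)) (j - 1)
              * conj' (trPlus n x u (j - 1))) := by
    intro j
    have hcu : conj' (cellInt n x j (u j * derivative (derivative (pconj (w j)))))
        = cellInt n x j (pconj (u j) * derivative (derivative (w j))) := by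
      rw [cellInt, cellInt, conj_intervalIntegral]
      refine intervalIntegral.integral_congr fun y _ => ?_
      simp only [eval_mul, map_mul, ← pconj_derivative, eval_pconj, Complex.conj_conj]
    rw [hcu]
    set Q : Polynomial ℂ :=
      w j * derivative (pconj (u j)) - derivative (w j) * pconj (u j) with hQ
    have hQder : derivative Q
        = w j * derivative (derivative (pconj (u j)))
          - pconj (u j) * derivative (derivative (w j)) := by
      rw [hQ]; simp only [derivative_sub, derivative_mul]; ring
    have hftc : cellInt n x j (w j * derivative (derivative (pconj (u j))))
        - cellInt n x j (pconj (u j) * derivative (derivative (w j)))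
        = Q.eval ((x j.succ : ℝ) : ℂ) - Q.eval ((x j.castSucc : ℝ) : ℂ) := by
      rw [cellInt, cellInt,
        ← intervalIntegral.integral_sub (intervalIntegrableEval _ _ _)
          (intervalIntegrableEval _ _ _),
        ← integral_derivative_eval Q]
      exact intervalIntegral.integral_congr fun y _ => by rw [hQder, eval_sub]
    rw [hftc, hQ]
    have hb : (w j * derivative (pconj (u j))
        - derivative (w j) * pconj (u j)).eval ((x j.succ : ℝ) : ℂ)
        = trMinus n x w j * conj' (trMinus n x (fun k => derivative (u k)) j)
          - trMinus n x (fun k => derivative (w k)) j * conj' (trMinus n x u j) := by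
      simp only [eval_sub, eval_mul, ← pconj_derivative, eval_pconj]; rfl
    have ha : (w j * derivative (pconj (u j))
        - derivative (w j) * pconj (u j)).eval ((x j.castSucc : ℝ) : ℂ)
        = trPlus n x w (j - 1) * conj' (trPlus n x (fun k => derivative (u k)) (j - 1))
          - trPlus n x (fun k => derivative (w k)) (j - 1)
              * conj' (trPlus n x u (j - 1)) := by
      simp only [eval_sub, eval_mul, ← pconj_derivative, eval_pconj, hplus]
    rw [hb, ha]
  -- global sums
  set S := ∑ j : Fin (n + 1), cellInt n x j (ut j * pconj (u j)) with hS
  set T := ∑ j : Fin (n + 1),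
      cellInt n x j (w j * derivative (derivative (pconj (u j)))) with hT
  set Rs := ∑ j : Fin (n + 1), R j with hRs
  set Wt := ∑ j : Fin (n + 1), cellInt n x j (w j * pconj (w j)) with hWt
  set U := ∑ j : Fin (n + 1),
      cellInt n x j (u j * derivative (derivative (pconj (w j)))) with hU
  set B1 := ∑ j : Fin (n + 1),
      (- fluxWx n x α₁ w j * conj' (trMinus n x u j)
        + fluxWx n x α₁ w (j - 1) * conj' (trPlus n x u (j - 1))
        + fluxWtilde n x α₂ w j * conj' (trMinus n x (fun k => derivative (u k)) j)
        - fluxWtilde n x α₂ w (j - 1)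
            * conj' (trPlus n x (fun k => derivative (u k)) (j - 1))) with hB1
  set B2 := ∑ j : Fin (n + 1),
      (fluxUx n x α₂ u j * conj' (trMinus n x w j)
        - fluxUx n x α₂ u (j - 1) * conj' (trPlus n x w (j - 1))
        - fluxUhat n x α₁ u j * conj' (trMinus n x (fun k => derivative (w k)) j)
        + fluxUhat n x α₁ u (j - 1)
            * conj' (trPlus n x (fun k => derivative (w k)) (j - 1))) with hB2
  set P := ∑ j : Fin (n + 1),
      ((trMinus n x w j * conj' (trMinus n x (fun k => derivative (u k)) j)
          - trMinus n x (fun k => derivative (w k)) j * conj' (trMinus n x u j))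
        - (trPlus n x w (j - 1) * conj' (trPlus n x (fun k => derivative (u k)) (j - 1))
          - trPlus n x (fun k => derivative (w k)) (j - 1)
              * conj' (trPlus n x u (j - 1)))) with hP
  have h1 : Complex.I * S + T + Rs = B1 := by
    rw [hS, hT, hRs, hB1, Finset.mul_sum, ← Finset.sum_add_distrib,
      ← Finset.sum_add_distrib]
    exact Finset.sum_congr rfl fun j _ => eq1 j
  have h2 : Wt - U = B2 := by
    rw [hWt, hU, hB2, ← Finset.sum_sub_distrib]
    exact Finset.sum_congr rfl fun j _ => eq2 j
  have h3 : T - conj' U = P := by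
    rw [hT, hU, hP, map_sum, ← Finset.sum_sub_distrib]
    exact Finset.sum_congr rfl fun j _ => eq3 j
  have hRconj : conj' Rs = Rs := by
    rw [hRs, map_sum]
    refine Finset.sum_congr rfl fun j _ => ?_
    simp only [hRdef]
    rw [conj_intervalIntegral]
    refine intervalIntegral.integral_congr fun y _ => ?_
    simp only [map_mul, Complex.conj_conj, Complex.conj_ofReal]
    ring
  have hWconj : conj' Wt = Wt := by
    rw [hWt, map_sum]
    refine Finset.sum_congr rfl fun j _ => ?_
    rw [cellInt, conj_intervalIntegral]
    refine intervalIntegral.integral_congr fun y _ => ?_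
    simp only [eval_mul, eval_pconj, map_mul, Complex.conj_conj]
    ring
  have c1 : conj' (Complex.I * S + T + Rs) = conj' B1 := congrArg conj' h1
  rw [map_add, map_add, map_mul, Complex.conj_I, hRconj] at c1
  have c2 : conj' (Wt - U) = conj' B2 := congrArg conj' h2
  rw [map_sub, hWconj] at c2
  have c3 : conj' (T - conj' U) = conj' P := congrArg conj' h3
  rw [map_sub, Complex.conj_conj] at c3
  -- flux cancellation
  set G : Fin (n + 1) → ℂ := fun j =>
    - fluxWx n x α₁ w j * conj' (trMinus n x u j)
      + fluxWtilde n x α₂ w j * conj' (trMinus n x (fun k => derivative (u k)) j)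
      - fluxUx n x α₂ u j * conj' (trMinus n x w j)
      + fluxUhat n x α₁ u j * conj' (trMinus n x (fun k => derivative (w k)) j)
      - (trMinus n x w j * conj' (trMinus n x (fun k => derivative (u k)) j)
          - trMinus n x (fun k => derivative (w k)) j * conj' (trMinus n x u j)) with hGdef
  set H : Fin (n + 1) → ℂ := fun j =>
    fluxWx n x α₁ w j * conj' (trPlus n x u j)
      - fluxWtilde n x α₂ w j * conj' (trPlus n x (fun k => derivative (u k)) j)
      + fluxUx n x α₂ u j * conj' (trPlus n x w j)
      - fluxUhat n x α₁ u j * conj' (trPlus n x (fun k => derivative (w k)) j)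
      + (trPlus n x w j * conj' (trPlus n x (fun k => derivative (u k)) j)
          - trPlus n x (fun k => derivative (w k)) j * conj' (trPlus n x u j)) with hHdef
  have hsum : B1 - B2 - P = ∑ j : Fin (n + 1), (G j + H j) := by
    rw [hB1, hB2, hP, ← Finset.sum_sub_distrib, ← Finset.sum_sub_distrib]
    have e : ∀ j : Fin (n + 1),
        (- fluxWx n x α₁ w j * conj' (trMinus n x u j)
          + fluxWx n x α₁ w (j - 1) * conj' (trPlus n x u (j - 1))
          + fluxWtilde n x α₂ w j * conj' (trMinus n x (fun k => derivative (u k)) j)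
          - fluxWtilde n x α₂ w (j - 1)
              * conj' (trPlus n x (fun k => derivative (u k)) (j - 1)))
        - (fluxUx n x α₂ u j * conj' (trMinus n x w j)
          - fluxUx n x α₂ u (j - 1) * conj' (trPlus n x w (j - 1))
          - fluxUhat n x α₁ u j * conj' (trMinus n x (fun k => derivative (w k)) j)
          + fluxUhat n x α₁ u (j - 1)
              * conj' (trPlus n x (fun k => derivative (w k)) (j - 1)))
        - ((trMinus n x w j * conj' (trMinus n x (fun k => derivative (u k)) j)
            - trMinus n x (fun k => derivative (w k)) j * conj' (trMinus n x u j))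
          - (trPlus n x w (j - 1)
              * conj' (trPlus n x (fun k => derivative (u k)) (j - 1))
            - trPlus n x (fun k => derivative (w k)) (j - 1)
              * conj' (trPlus n x u (j - 1))))
        = G j + H (j - 1) := by
      intro j
      simp only [hGdef, hHdef]
      ring
    rw [Finset.sum_congr rfl fun j _ => e j, Finset.sum_add_distrib]
    rw [show (∑ j : Fin (n + 1), (G j + H j))
        = (∑ j : Fin (n + 1), G j) + ∑ j : Fin (n + 1), H j from Finset.sum_add_distrib]
    congr 1
    exact Fintype.sum_equiv (Equiv.subRight (1 : Fin (n + 1)))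
      (fun j => H (j - 1)) H (fun j => rfl)
  have hE : B1 - B2 - P = conj' B1 - conj' B2 - conj' P := by
    rw [← map_sub, ← map_sub, hsum, map_sum]
    refine Finset.sum_congr rfl fun j _ => ?_
    have : conj' (G j + H j) = G j + H j := by
      simp only [hGdef, hHdef, fluxWx, fluxWtilde, fluxUx, fluxUhat, map_add, map_sub,
        map_mul, map_neg, map_one, Complex.conj_conj, Complex.conj_ofReal]
      ring
    rw [this]
  have hIzero : Complex.I * (S + conj' S) = Complex.I * 0 := by
    rw [mul_zero]
    linear_combination h1 - c1 - h3 + c3 - h2 + c2 + hE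
  exact mul_left_cancel₀ Complex.I_ne_zero hIzero

/-- **Theorem 2.1, conservation of mass / L²-stability of the semi-discrete DG scheme**:
if `(u_h, w_h)` is a solution of the semi-discrete DG scheme for the nonlinear biharmonic
Schrödinger equation `i u_t + u_xxxx + u F'(|u|²) = 0` with the numerical fluxes given by
parameters `α₁, α₂ ∈ [0,1]`, then the discrete mass `M_h(t) = ∫_I |u_h(x,t)|² dx`
satisfies `M_h(t) = M_h(0)` for all `t ≥ 0`.  The interval `I` is partitioned into the
`n+1` cells `I_j = (x_{j−1/2}, x_{j+1/2})`, `u_h(t), w_h(t)` lie in the space `V_h^q` of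
piecewise polynomials of degree `≤ q`, `∂ₜu_h = u_ht` pointwise, and interfaces are
treated periodically (`j + 1` and `j - 1` are computed in `Fin (n+1)`). -/
theorem dg_mass_conservation
    (n q : ℕ) (hq : 1 ≤ q)
    (x : Fin (n + 2) → ℝ) (hx : StrictMono x)
    (F' : ℝ → ℝ) (hF' : ContinuousOn F' (Set.Ici 0))
    (α₁ α₂ : ℝ) (hα₁ : α₁ ∈ Set.Icc (0 : ℝ) 1) (hα₂ : α₂ ∈ Set.Icc (0 : ℝ) 1)
    (uh wh uht : ℝ → Fin (n + 1) → Polynomial ℂ)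
    (hdegu : ∀ t : ℝ, 0 ≤ t → ∀ j, (uh t j).natDegree ≤ q)
    (hdegw : ∀ t : ℝ, 0 ≤ t → ∀ j, (wh t j).natDegree ≤ q)
    (hdegut : ∀ t : ℝ, 0 ≤ t → ∀ j, (uht t j).natDegree ≤ q)
    -- u_h is differentiable in time with derivative u_ht
    (hderiv : ∀ t : ℝ, 0 ≤ t → ∀ j, ∀ y : ℝ,
      HasDerivWithinAt (fun s : ℝ => (uh s j).eval ((y : ℝ) : ℂ))
        ((uht t j).eval ((y : ℝ) : ℂ)) (Set.Ici 0) t)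
    -- first DG scheme equation, on each cell, for every test polynomial φ of degree ≤ q
    (scheme1 : ∀ t : ℝ, 0 ≤ t → ∀ j : Fin (n + 1), ∀ φ : Polynomial ℂ, φ.natDegree ≤ q →
      (∫ y in (x j.castSucc : ℝ)..(x j.succ : ℝ),
          Complex.I * (uht t j).eval ((y : ℝ) : ℂ) * φ.eval ((y : ℝ) : ℂ)
            + (wh t j).eval ((y : ℝ) : ℂ) * (φ.derivative.derivative).eval ((y : ℝ) : ℂ)
            + (uh t j).eval ((y : ℝ) : ℂ)
                * (F' (‖(uh t j).eval ((y : ℝ) : ℂ)‖ ^ 2) : ℂ)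
                * φ.eval ((y : ℝ) : ℂ)) =
        - fluxWx n x α₁ (wh t) j * φ.eval ((x j.succ : ℝ) : ℂ)
          + fluxWx n x α₁ (wh t) (j - 1) * φ.eval ((x j.castSucc : ℝ) : ℂ)
          + fluxWtilde n x α₂ (wh t) j * φ.derivative.eval ((x j.succ : ℝ) : ℂ)
          - fluxWtilde n x α₂ (wh t) (j - 1) * φ.derivative.eval ((x j.castSucc : ℝ) : ℂ))
    -- second DG scheme equation, on each cell, for every test polynomial ψ of degree ≤ q
    (scheme2 : ∀ t : ℝ, 0 ≤ t → ∀ j : Fin (n + 1), ∀ ψ : Polynomial ℂ, ψ.natDegree ≤ q →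
      (∫ y in (x j.castSucc : ℝ)..(x j.succ : ℝ),
          (wh t j).eval ((y : ℝ) : ℂ) * ψ.eval ((y : ℝ) : ℂ)
            - (uh t j).eval ((y : ℝ) : ℂ) * (ψ.derivative.derivative).eval ((y : ℝ) : ℂ)) =
        fluxUx n x α₂ (uh t) j * ψ.eval ((x j.succ : ℝ) : ℂ)
          - fluxUx n x α₂ (uh t) (j - 1) * ψ.eval ((x j.castSucc : ℝ) : ℂ)
          - fluxUhat n x α₁ (uh t) j * ψ.derivative.eval ((x j.succ : ℝ) : ℂ)
          + fluxUhat n x α₁ (uh t) (j - 1) * ψ.derivative.eval ((x j.castSucc : ℝ) : ℂ)) :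
    -- conclusion: conservation of the discrete mass M_h(t) = ∫_I |u_h|² dx
    ∀ t : ℝ, 0 ≤ t →
      (∑ j : Fin (n + 1), ∫ y in (x j.castSucc : ℝ)..(x j.succ : ℝ),
          ‖(uh t j).eval ((y : ℝ) : ℂ)‖ ^ 2) =
      ∑ j : Fin (n + 1), ∫ y in (x j.castSucc : ℝ)..(x j.succ : ℝ),
          ‖(uh 0 j).eval ((y : ℝ) : ℂ)‖ ^ 2 := by
  -- the mass as the real part of a complex-valued function of time
  set Gf : ℝ → ℂ := fun s => ∑ j : Fin (n + 1),
      cellInt n x j (uh s j * pconj (uh s j)) with hGf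
  have hMre : ∀ s : ℝ,
      (∑ j : Fin (n + 1), ∫ y in (x j.castSucc : ℝ)..(x j.succ : ℝ),
          ‖(uh s j).eval ((y : ℝ) : ℂ)‖ ^ 2) = (Gf s).re := by
    intro s
    rw [hGf]
    rw [Complex.re_sum]
    exact Finset.sum_congr rfl fun j _ => absSq_integral_eq_re _ _ _
  -- the complex-valued mass has zero right derivative on [0, ∞)
  have hder0 : ∀ s : ℝ, 0 ≤ s → HasDerivWithinAt Gf 0 (Set.Ici 0) s := by
    intro s hs
    have hcell : ∀ j : Fin (n + 1),
        HasDerivWithinAt (fun r : ℝ => cellInt n x j (uh r j * pconj (uh r j)))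
          (cellInt n x j (uht s j * pconj (uh s j) + uh s j * pconj (uht s j)))
          (Set.Ici 0) s := by
      intro j
      exact hasDeriv_cell q (x j.castSucc : ℝ) (x j.succ : ℝ)
        (fun r => uh r j) (fun r => uht r j) s hs
        (fun r hr => hdegu r hr j) (hdegut s hs j) (fun y => hderiv s hs j y)
    have hsum : HasDerivWithinAt Gf
        (∑ j : Fin (n + 1),
          cellInt n x j (uht s j * pconj (uh s j) + uh s j * pconj (uht s j)))
        (Set.Ici 0) s := HasDerivWithinAt.fun_sum fun j _ => hcell j
    have hzero : (∑ j : Fin (n + 1), cellInt n x j (uht s j * pconj (uh s j)))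
        + conj' (∑ j : Fin (n + 1), cellInt n x j (uht s j * pconj (uh s j))) = 0 :=
      key_step n q x F' hF' α₁ α₂ (uh s) (wh s) (uht s) (hdegu s hs) (hdegw s hs)
        (fun j φ hφ => scheme1 s hs j φ hφ) (fun j ψ hψ => scheme2 s hs j ψ hψ)
    have hsplit : ∀ j : Fin (n + 1),
        cellInt n x j (uht s j * pconj (uh s j) + uh s j * pconj (uht s j))
          = cellInt n x j (uht s j * pconj (uh s j))
            + conj' (cellInt n x j (uht s j * pconj (uh s j))) := by
      intro j
      have h1 : cellInt n x j (uht s j * pconj (uh s j) + uh s j * pconj (uht s j))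
          = cellInt n x j (uht s j * pconj (uh s j))
            + cellInt n x j (uh s j * pconj (uht s j)) := by
        rw [cellInt, cellInt, cellInt,
          ← intervalIntegral.integral_add (intervalIntegrableEval _ _ _)
            (intervalIntegrableEval _ _ _)]
        exact intervalIntegral.integral_congr fun y _ => eval_add
      have h2 : cellInt n x j (uh s j * pconj (uht s j))
          = conj' (cellInt n x j (uht s j * pconj (uh s j))) := by
        rw [cellInt, cellInt, conj_intervalIntegral]
        refine intervalIntegral.integral_congr fun y _ => ?_
        simp only [eval_mul, eval_pconj, map_mul, Complex.conj_conj]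
        ring
      rw [h1, h2]
    have hD : (∑ j : Fin (n + 1),
        cellInt n x j (uht s j * pconj (uh s j) + uh s j * pconj (uht s j))) = 0 := by
      rw [Finset.sum_congr rfl fun j _ => hsplit j, Finset.sum_add_distrib, ← map_sum]
      exact hzero
    rw [hD] at hsum
    exact hsum
  -- hence the real mass has zero right derivative
  have hMd : ∀ s : ℝ, 0 ≤ s →
      HasDerivWithinAt (fun r : ℝ => (Gf r).re) 0 (Set.Ici 0) s := by
    intro s hs
    have h := (Complex.reCLM.hasFDerivAt (x := Gf s)).comp_hasDerivWithinAt s (hder0 s hs)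
    simpa [Function.comp_def] using h
  -- conclude by the mean value theorem
  intro t ht
  have hcont : ContinuousOn (fun r : ℝ => (Gf r).re) (Set.Icc 0 t) := by
    intro s hs
    exact ((hMd s hs.1).continuousWithinAt).mono (fun r hr => hr.1)
  have hd : ∀ s ∈ Set.Ico (0 : ℝ) t,
      HasDerivWithinAt (fun r : ℝ => (Gf r).re) 0 (Set.Ici s) s := by
    intro s hs
    exact (hMd s hs.1).mono (Set.Ici_subset_Ici.2 hs.1)
  have hconst := constant_of_has_deriv_right_zero hcont hd t ⟨ht, le_refl t⟩
  rw [hMre t, hMre 0]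
  exact hconst

end
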